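/- For every real number r with |r| > 1 and every complex number z, the equation Complex.sinh z = r * Complex.cosh z holds if and only if there exists an integer k such that z = Real.artanh (1/r) + (k + 1/2) * π * I. In particular, no solution is real. -/

import Mathlib

/-- The inverse hyperbolic tangent on `(-1, 1)` (not present in Mathlib),
`artanh x = (1/2) · log((1+x)/(1-x))`. -/
noncomputable def Real.artanh' (x : ℝ) : ℝ := (1 / 2) * Real.log ((1 + x) / (1 - x))

/-- For every real number `r` with `|r| > 1` and every complex number `z`, the
equation `Complex.sinh z = r * Complex.cosh z` holds if and only if there exists an integer `k`
such that `z = Real.artanh' (1/r) + (k + 1/2) * π * I`.  In particular no solution is real. -/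
theorem complex_sinh_eq_mul_cosh_iff_of_one_lt_abs (r : ℝ) (hr : 1 < |r|) (z : ℂ) :
    (Complex.sinh z = (r : ℂ) * Complex.cosh z ↔
      ∃ k : ℤ, z = (Real.artanh' (1 / r) : ℂ) + ((k : ℂ) + 1 / 2) * (Real.pi : ℂ) * Complex.I) ∧
    (Complex.sinh z = (r : ℂ) * Complex.cosh z → z.im ≠ 0) := by
  have hr0 : r ≠ 0 := by rintro rfl; norm_num at hr
  have hr1 : (1:ℝ) - r ≠ 0 := by
    rcases lt_abs.mp hr with h | h <;> intro h' <;> nlinarith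
  have h1rC : ((1:ℂ) - r) ≠ 0 := by exact_mod_cast Complex.ofReal_ne_zero.mpr hr1
  set C : ℝ := (1 + r) / (1 - r) with hCdef
  have hCneg : C < 0 := by
    rcases lt_abs.mp hr with h | h
    · exact div_neg_of_pos_of_neg (by linarith) (by linarith)
    · exact div_neg_of_neg_of_pos (by linarith) (by linarith)
  have hCne : (C:ℂ) ≠ 0 := by exact_mod_cast hCneg.ne
  have hCcast : (C:ℂ) = ((1:ℂ) + r) / (1 - r) := by rw [hCdef]; push_cast; ring
  -- the complex logarithm of the negative real number C
  have hlog : Complex.log (C:ℂ) = (Real.log (-C) : ℂ) + Real.pi * Complex.I := by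
    rw [Complex.log]
    congr 1
    · rw [Complex.norm_real, Real.norm_eq_abs, abs_of_neg hCneg]
    · rw [Complex.arg_ofReal_of_neg hCneg]
  -- relating artanh (1/r) to log (-C)
  have hart : (2:ℝ) * Real.artanh' (1/r) = Real.log (-C) := by
    have h1 : (1 + 1/r) / (1 - 1/r) = -C := by
      rw [hCdef]
      have hrm1 : r - 1 ≠ 0 := fun h => hr1 (by linarith)
      field_simp [hr0, hr1, hrm1]
      ring
    rw [Real.artanh', h1]; ring
  have hlog2 : Complex.log (C:ℂ) =
      2 * (Real.artanh' (1/r) : ℂ) + Real.pi * Complex.I := by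
    rw [hlog]
    congr 1
    exact_mod_cast congrArg Complex.ofReal hart.symm
  -- key equivalence with the exponential equation
  have key : Complex.sinh z = (r:ℂ) * Complex.cosh z ↔ Complex.exp (2*z) = (C:ℂ) := by
    have hE : Complex.exp z ≠ 0 := Complex.exp_ne_zero z
    have h2 : Complex.exp (2*z) = Complex.exp z * Complex.exp z := by
      rw [two_mul, Complex.exp_add]
    have hid : 2 * Complex.exp z * (Complex.sinh z - (r:ℂ) * Complex.cosh z)
        = ((1:ℂ) - r) * Complex.exp (2*z) - (1 + r) := by
      rw [Complex.sinh, Complex.cosh, h2, Complex.exp_neg]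
      field_simp
      ring
    constructor
    · intro h
      have h0 : ((1:ℂ) - r) * Complex.exp (2*z) - (1 + r) = 0 := by
        rw [← hid, h]; ring
      rw [hCcast, eq_div_iff h1rC]
      linear_combination h0
    · intro h
      have h0 : 2 * Complex.exp z * (Complex.sinh z - (r:ℂ) * Complex.cosh z) = 0 := by
        rw [hid, h, hCcast]
        field_simp
        ring
      have h2E : (2 : ℂ) * Complex.exp z ≠ 0 := by
        exact mul_ne_zero two_ne_zero hE
      have := (mul_eq_zero.mp h0).resolve_left h2E
      exact sub_eq_zero.mp this
  have main : Complex.sinh z = (r : ℂ) * Complex.cosh z ↔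
      ∃ k : ℤ, z = (Real.artanh' (1 / r) : ℂ) + ((k : ℂ) + 1 / 2) * (Real.pi : ℂ) * Complex.I := by
    rw [key, show (C:ℂ) = Complex.exp (Complex.log (C:ℂ)) from (Complex.exp_log hCne).symm,
      Complex.exp_eq_exp_iff_exists_int]
    constructor
    · rintro ⟨n, hn⟩
      refine ⟨n, ?_⟩
      rw [hlog2] at hn
      linear_combination hn / 2
    · rintro ⟨n, hn⟩
      refine ⟨n, ?_⟩
      rw [hlog2]
      linear_combination 2 * hn
  refine ⟨main, fun h => ?_⟩
  obtain ⟨k, hk⟩ := main.mp h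
  have him : z.im = ((k:ℝ) + 1/2) * Real.pi := by
    rw [hk]; simp
  rw [him]
  have hk2 : ((k:ℝ) + 1/2) ≠ 0 := by
    intro h'
    have h2 : ((2*k+1 : ℤ) : ℝ) = 0 := by push_cast; linarith
    have : (2*k+1 : ℤ) = 0 := by exact_mod_cast h2
    omega
  exact mul_ne_zero hk2 Real.pi_ne_zero
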